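/- Let i ≥ 1 be an integer, A > 0, s > 0, δ ∈ [0,1], μ, m, y ∈ ℝ, and β ∈ ℝ^i. Then ∫_{ℝ^i} ( ∏_{k=1}^{i} φ(x_k; μ, A) ) · φ( y − ⟨x, β⟩ − m; 0, 1/s )^{1/(1+δ)} dx = ( s/(2π) )^{1/(2(1+δ))} · ( 1 + (A s/(1+δ))·‖β‖² )^{−1/2} · exp( − ( y − m − μ·(Σ_{k=1}^{i} β_k) )² · s / ( 2(1+δ)·( 1 + (A s/(1+δ))·‖β‖² ) ) ), where ⟨x, β⟩ = Σ_k x_k β_k and ‖β‖² = Σ_k β_k². -/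

import Mathlib

open MeasureTheory

noncomputable section

/-- Density of the real Gaussian distribution `N(m, v)` with mean `m` and variance `v`. -/
def gauss (x m v : ℝ) : ℝ := (2 * Real.pi * v) ^ (-(1:ℝ)/2) * Real.exp (-(x - m)^2 / (2*v))

open Real in
lemma gauss_nonneg {x m v : ℝ} (hv : 0 < v) : 0 ≤ gauss x m v := by
  unfold gauss; positivity

lemma continuous_gauss (m v : ℝ) : Continuous fun x => gauss x m v := by
  unfold gauss; fun_prop

open Real in
lemma integrable_gauss (m v : ℝ) (hv : 0 < v) : Integrable fun x => gauss x m v := by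
  unfold gauss
  apply Integrable.const_mul
  have h : ∀ x : ℝ, -(x - m)^2/(2*v) = -(1/(2*v)) * (x - m)^2 := by intro x; field_simp
  simp_rw [h]
  exact (integrable_exp_neg_mul_sq (by positivity)).comp_sub_right m

open Real in
lemma integral_exp_quadratic (a b c : ℝ) (ha : 0 < a) :
    ∫ x : ℝ, Real.exp (-a*x^2 + b*x + c) = Real.sqrt (π/a) * Real.exp (b^2/(4*a) + c) := by
  have h : ∀ x : ℝ, -a*x^2 + b*x + c = -a*(x - b/(2*a))^2 + (b^2/(4*a) + c) := by
    intro x; field_simp; ring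
  simp_rw [h, Real.exp_add, integral_mul_const]
  congr 1
  rw [integral_sub_right_eq_self (μ := volume) (fun x => Real.exp (-a*x^2)) (b/(2*a)),
    integral_gaussian]

open Real in
lemma gauss_mul_exp_integral (A τ : ℝ) (hA : 0 < A) (hτ : 0 < τ) (μ c b : ℝ) :
    ∫ x : ℝ, gauss x μ A * Real.exp (-τ * (c - x*b)^2 / 2)
    = (1+τ*A*b^2) ^ (-(1:ℝ)/2) * Real.exp (-τ*(c-μ*b)^2/(2*(1+τ*A*b^2))) := by
  have hD : 0 < 1+τ*A*b^2 := by positivity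
  have ha : 0 < 1/(2*A) + τ*b^2/2 := by positivity
  have key : ∀ x : ℝ, gauss x μ A * Real.exp (-τ*(c-x*b)^2/2)
      = (2*π*A)^(-(1:ℝ)/2) * Real.exp (-(1/(2*A) + τ*b^2/2)*x^2 + (μ/A + τ*c*b)*x
          + (-(μ^2/(2*A)) - τ*c^2/2)) := by
    intro x; unfold gauss
    rw [mul_assoc, ← Real.exp_add]
    congr 1
    field_simp
    ring
  simp_rw [key]
  rw [integral_const_mul, integral_exp_quadratic _ _ _ ha, ← mul_assoc]
  have hx : (0:ℝ) < 2*π*A := by positivity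
  have hconst : (2*π*A)^(-(1:ℝ)/2) * Real.sqrt (π/(1/(2*A) + τ*b^2/2))
      = (1+τ*A*b^2)^(-(1:ℝ)/2) := by
    rw [Real.sqrt_eq_rpow,
      show π/(1/(2*A) + τ*b^2/2) = (2*π*A)/(1+τ*A*b^2) from by field_simp,
      Real.div_rpow hx.le hD.le,
      show -(1:ℝ)/2 = -(1/2) from by norm_num, Real.rpow_neg hx.le, Real.rpow_neg hD.le]
    have h1 : (2*π*A) ^ ((1:ℝ)/2) ≠ 0 := by positivity
    field_simp
  rw [hconst]
  congr 1
  have hD' : (1+τ*A*b^2) ≠ 0 := ne_of_gt hD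
  rw [Real.exp_eq_exp]
  field_simp
  ring

open Real in
lemma gauss_aux (A τ μ : ℝ) (hA : 0 < A) (hτ : 0 < τ) :
    ∀ (n : ℕ) (c : ℝ) (β : Fin n → ℝ),
    ∫ x : Fin n → ℝ, (∏ k, gauss (x k) μ A) * Real.exp (-τ*(c - ∑ k, x k * β k)^2/2)
    = (1+τ*A*∑ k, β k ^ 2)^(-(1:ℝ)/2) *
        Real.exp (-τ*(c - μ*∑ k, β k)^2/(2*(1+τ*A*∑ k, β k ^ 2))) := by
  intro n
  induction n with
  | zero =>
    intro c β
    simp only [Finset.univ_eq_empty, Finset.prod_empty, Finset.sum_empty, one_mul, mul_zero,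
      sub_zero, volume_pi, integral_const, measureReal_def, Measure.pi_empty_univ, ENNReal.toReal_one, smul_eq_mul]
    norm_num
  | succ n ih =>
    intro c β
    have hQ : (0:ℝ) ≤ ∑ k : Fin n, β k.succ ^ 2 := by positivity
    set Q := ∑ k : Fin n, β k.succ ^ 2 with hQdef
    set S := ∑ k : Fin n, β k.succ with hSdef
    have hD : (0:ℝ) < 1 + τ*A*Q := by positivity
    rw [volume_pi, ← ((measurePreserving_piFinSuccAbove (fun _ : Fin (n+1) =>
      (volume : Measure ℝ)) 0).symm).integral_comp']
    simp_rw [MeasurableEquiv.piFinSuccAbove_symm_apply, Fin.insertNthEquiv,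
      Fin.insertNth_zero, Equiv.coe_fn_mk, Fin.prod_univ_succ, Fin.sum_univ_succ,
      Fin.cons_zero, Fin.cons_succ, cast_eq]
    rw [← volume_pi]
    have hg := integrable_gauss μ A hA
    have hP : Integrable (fun w : Fin n → ℝ => ∏ k, gauss (w k) μ A) :=
      Integrable.fin_nat_prod (fun _ => hg)
    have hGI : Integrable (fun p : ℝ × (Fin n → ℝ) =>
        gauss p.1 μ A * ∏ k, gauss (p.2 k) μ A) (volume.prod volume) := hg.mul_prod hP
    have hF : Integrable (fun p : ℝ × (Fin n → ℝ) =>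
        (gauss p.1 μ A * ∏ k, gauss (p.2 k) μ A) *
          Real.exp (-τ * (c - (p.1 * β 0 + ∑ k : Fin n, p.2 k * β k.succ))^2/2))
        (volume.prod volume) := by
      apply hGI.mono'
      · apply Continuous.aestronglyMeasurable
        have c1 : Continuous fun p : ℝ × (Fin n → ℝ) => gauss p.1 μ A :=
          (continuous_gauss μ A).comp continuous_fst
        have c2 : Continuous fun p : ℝ × (Fin n → ℝ) => ∏ k, gauss (p.2 k) μ A :=
          continuous_finset_prod _ fun k _ =>
            (continuous_gauss μ A).comp ((continuous_apply k).comp continuous_snd)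
        have c3 : Continuous fun p : ℝ × (Fin n → ℝ) =>
            Real.exp (-τ * (c - (p.1 * β 0 + ∑ k : Fin n, p.2 k * β k.succ))^2/2) := by
          apply Real.continuous_exp.comp
          fun_prop
        exact (c1.mul c2).mul c3
      · filter_upwards with p
        have h1 : 0 ≤ gauss p.1 μ A * ∏ k, gauss (p.2 k) μ A :=
          mul_nonneg (gauss_nonneg hA) (Finset.prod_nonneg fun k _ => gauss_nonneg hA)
        rw [Real.norm_eq_abs, abs_mul, abs_of_nonneg h1, abs_of_pos (Real.exp_pos _)]
        apply mul_le_of_le_one_right h1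
        rw [Real.exp_le_one_iff]
        have : (0:ℝ) ≤ τ * (c - (p.1 * β 0 + ∑ k : Fin n, p.2 k * β k.succ))^2/2 := by
          positivity
        linarith
    rw [integral_prod _ hF]
    have inner : ∀ z : ℝ, (∫ w : Fin n → ℝ, (gauss z μ A * ∏ k, gauss (w k) μ A) *
          Real.exp (-τ * (c - (z * β 0 + ∑ k : Fin n, w k * β k.succ))^2/2))
        = gauss z μ A * ((1+τ*A*Q)^(-(1:ℝ)/2) *
            Real.exp (-τ*((c - z*β 0) - μ*S)^2/(2*(1+τ*A*Q)))) := by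
      intro z
      have harg : ∀ w : Fin n → ℝ, (gauss z μ A * ∏ k, gauss (w k) μ A) *
            Real.exp (-τ * (c - (z * β 0 + ∑ k : Fin n, w k * β k.succ))^2/2)
          = gauss z μ A * ((∏ k, gauss (w k) μ A) *
            Real.exp (-τ * ((c - z * β 0) - ∑ k : Fin n, w k * β k.succ)^2/2)) := by
        intro w; rw [sub_add_eq_sub_sub, mul_assoc]
      simp_rw [harg]
      rw [integral_const_mul]
      congr 1
      exact ih (c - z*β 0) fun k => β k.succ
    simp_rw [inner]
    have harg2 : ∀ z : ℝ, gauss z μ A * ((1+τ*A*Q)^(-(1:ℝ)/2) *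
          Real.exp (-τ*((c - z*β 0) - μ*S)^2/(2*(1+τ*A*Q))))
        = (1+τ*A*Q)^(-(1:ℝ)/2) * (gauss z μ A *
          Real.exp (-(τ/(1+τ*A*Q)) * ((c - μ*S) - z*β 0)^2/2)) := by
      intro z
      rw [show -τ*((c - z*β 0) - μ*S)^2/(2*(1+τ*A*Q))
          = -(τ/(1+τ*A*Q)) * ((c - μ*S) - z*β 0)^2/2 from by field_simp; ring]
      ring
    simp_rw [harg2]
    rw [integral_const_mul, gauss_mul_exp_integral A (τ/(1+τ*A*Q)) hA (by positivity) μ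
      (c - μ*S) (β 0)]
    have hE : (0:ℝ) < 1+(τ/(1+τ*A*Q))*A*(β 0)^2 := by positivity
    rw [← mul_assoc, ← Real.mul_rpow hD.le hE.le,
      show (1+τ*A*Q)*(1+(τ/(1+τ*A*Q))*A*(β 0)^2) = 1+τ*A*((β 0)^2+Q) from by
        field_simp; ring]
    congr 1
    rw [Real.exp_eq_exp, hQdef, hSdef]
    field_simp
    ring

theorem statement7 (i : ℕ) (hi : 1 ≤ i) (A s : ℝ) (hA : 0 < A) (hs : 0 < s)
    (δ : ℝ) (hδ : δ ∈ Set.Icc (0:ℝ) 1) (μ m y : ℝ) (β : Fin i → ℝ) :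
    (∫ x : Fin i → ℝ, (∏ k, gauss (x k) μ A) *
        gauss (y - (∑ k, x k * β k) - m) 0 (1/s) ^ ((1:ℝ)/(1+δ))) =
      (s/(2*Real.pi)) ^ ((1:ℝ)/(2*(1+δ))) *
        (1 + (A*s/(1+δ)) * ∑ k, β k ^ 2) ^ (-(1:ℝ)/2) *
          Real.exp (-(y - m - μ * ∑ k, β k)^2 * s /
            (2*(1+δ)*(1 + (A*s/(1+δ)) * ∑ k, β k ^ 2))) := by
  have h1p : (0:ℝ) < 1 + δ := by linarith [hδ.1]
  have hτ : 0 < s/(1+δ) := by positivity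
  have hQ : (0:ℝ) ≤ ∑ k, β k ^ 2 := by positivity
  have hgp : ∀ z : ℝ, gauss z 0 (1/s) ^ ((1:ℝ)/(1+δ))
      = (s/(2*Real.pi))^((1:ℝ)/(2*(1+δ))) * Real.exp (-(s/(1+δ))*z^2/2) := by
    intro z
    unfold gauss
    have hx : (0:ℝ) ≤ 2*Real.pi*(1/s) := by positivity
    have hy : (0:ℝ) ≤ s/(2*Real.pi) := by positivity
    rw [Real.mul_rpow (Real.rpow_nonneg hx _) (Real.exp_pos _).le]
    congr 1
    · rw [← Real.rpow_mul hx,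
        show (2*Real.pi*(1/s)) = (s/(2*Real.pi))⁻¹ from by field_simp,
        Real.inv_rpow hy, ← Real.rpow_neg hy]
      congr 1
      field_simp
    · rw [← Real.exp_mul]
      congr 1
      field_simp
      ring
  have harg : ∀ x : Fin i → ℝ, (∏ k, gauss (x k) μ A) *
        gauss (y - (∑ k, x k * β k) - m) 0 (1/s) ^ ((1:ℝ)/(1+δ))
      = (s/(2*Real.pi))^((1:ℝ)/(2*(1+δ))) * ((∏ k, gauss (x k) μ A) *
          Real.exp (-(s/(1+δ))*((y - m) - ∑ k, x k * β k)^2/2)) := by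
    intro x
    rw [hgp, show (y - (∑ k, x k * β k) - m)^2 = ((y - m) - ∑ k, x k * β k)^2 from by ring]
    ring
  simp_rw [harg]
  rw [integral_const_mul, gauss_aux A (s/(1+δ)) μ hA hτ i (y - m) β]
  rw [show 1 + s/(1+δ)*A*∑ k, β k ^ 2 = 1 + (A*s/(1+δ))*∑ k, β k ^ 2 from by ring,
    ← mul_assoc]
  congr 1
  rw [show (y - m) - μ*∑ k, β k = y - m - μ*∑ k, β k from by ring]
  congr 1
  have hne : (1:ℝ) + (A*s/(1+δ))*∑ k, β k ^ 2 ≠ 0 := by positivity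
  field_simp
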